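/- (Extension of a predimension, additivity.) Let R be a ring and pdim a predimension on R. Define, for every R-module M, dim(M) := sup { pdim(P) : P a finitely generated projective submodule of M } ∈ [0, +∞]. Then for every short exact sequence of R-modules 0 → A → B → C → 0, one has dim(B) = dim(A) + dim(C), where the sum is taken in [0, +∞] in the natural way. -/

import Mathlib

open scoped ENNReal

universe u v

/-- The closure of a submodule `K ⊆ N`: the intersection of the kernels of all `R`-linear
functionals `N →ₗ[R] R` vanishing on `K`. -/
def submoduleClosure (R : Type v) [Ring R] {N : Type u} [AddCommGroup N] [Module R N]
    (K : Submodule R N) : Submodule R N :=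
  sInf {p : Submodule R N | ∃ f : N →ₗ[R] R, (∀ x ∈ K, f x = 0) ∧ p = LinearMap.ker f}

/-- A *predimension* on a ring `R`: an assignment of a finite value to every finitely generated
projective (left) `R`-module that is isomorphism-invariant, additive under direct sums, and
such that for every submodule `K` of a finitely generated projective module `Q`, the closure of
`K` in `Q` is a direct summand of `Q` whose predimension is the supremum of the predimensions
of the finitely generated projective submodules of `K`.

(The underlying function is defined on all `R`-modules in the universe `u`; its values on
modules that are not finitely generated projective are irrelevant.) -/
structure Predimension (R : Type v) [Ring R] where
  pdim : (M : Type u) → [AddCommGroup M] → [Module R M] → ℝ≥0∞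
  pdim_ne_top : ∀ (M : Type u) [AddCommGroup M] [Module R M],
    Module.Finite R M → Module.Projective R M → pdim M ≠ ⊤
  pdim_congr : ∀ (P Q : Type u) [AddCommGroup P] [Module R P] [AddCommGroup Q] [Module R Q],
    Module.Finite R P → Module.Projective R P → Module.Finite R Q → Module.Projective R Q →
    Nonempty (P ≃ₗ[R] Q) → pdim P = pdim Q
  pdim_add : ∀ (P Q : Type u) [AddCommGroup P] [Module R P] [AddCommGroup Q] [Module R Q],
    Module.Finite R P → Module.Projective R P → Module.Finite R Q → Module.Projective R Q →
    pdim (P × Q) = pdim P + pdim Q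
  closure_isCompl : ∀ (Q : Type u) [AddCommGroup Q] [Module R Q],
    Module.Finite R Q → Module.Projective R Q → ∀ K : Submodule R Q,
      ∃ C : Submodule R Q, IsCompl (submoduleClosure R K) C
  pdim_closure : ∀ (Q : Type u) [AddCommGroup Q] [Module R Q],
    Module.Finite R Q → Module.Projective R Q → ∀ K : Submodule R Q,
      pdim ↥(submoduleClosure R K) =
        sSup {x : ℝ≥0∞ | ∃ P : Submodule R Q, P ≤ K ∧
          Module.Finite R ↥P ∧ Module.Projective R ↥P ∧ x = pdim ↥P}

/-- The dimension function extending a predimension: `dim M` is the supremum of the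
predimensions of the finitely generated projective submodules of `M`. -/
noncomputable def Predimension.dim {R : Type v} [Ring R] (pd : Predimension.{u, v} R)
    (M : Type u) [AddCommGroup M] [Module R M] : ℝ≥0∞ :=
  sSup {x : ℝ≥0∞ | ∃ P : Submodule R M,
    Module.Finite R ↥P ∧ Module.Projective R ↥P ∧ x = pd.pdim ↥P}


section Helpers

variable {R : Type v} [Ring R]

theorem le_submoduleClosure {N : Type u} [AddCommGroup N] [Module R N] (K : Submodule R N) :
    K ≤ submoduleClosure R K := by
  refine le_sInf ?_
  rintro p ⟨φ, hφ, rfl⟩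
  intro x hx
  exact LinearMap.mem_ker.mpr (hφ x hx)

theorem finite_of_isCompl {E : Type u} [AddCommGroup E] [Module R E]
    (hE : Module.Finite R E) {p q : Submodule R E} (h : IsCompl p q) :
    Module.Finite R ↥p := by
  haveI := hE
  refine Module.Finite.of_surjective (Submodule.linearProjOfIsCompl p q h) ?_
  intro x
  exact ⟨(x : E), Submodule.linearProjOfIsCompl_apply_left h x⟩

theorem projective_of_isCompl {E : Type u} [AddCommGroup E] [Module R E]
    (hE : Module.Projective R E) {p q : Submodule R E} (h : IsCompl p q) :
    Module.Projective R ↥p := by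
  haveI := hE
  exact Module.Projective.of_split p.subtype (Submodule.linearProjOfIsCompl p q h)
    (LinearMap.ext fun x => Submodule.linearProjOfIsCompl_apply_left h x)

theorem Predimension.le_dim_of_equiv (pd : Predimension.{u, v} R)
    {M N : Type u} [AddCommGroup M] [Module R M] [AddCommGroup N] [Module R N]
    (hfin : Module.Finite R N) (hproj : Module.Projective R N)
    (P : Submodule R M) (e : N ≃ₗ[R] ↥P) : pd.pdim N ≤ pd.dim M := by
  haveI := hfin
  have hf : Module.Finite R ↥P := Module.Finite.equiv e
  have hp : Module.Projective R ↥P := Module.Projective.of_equiv e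
  rw [pd.pdim_congr N ↥P hfin hproj hf hp ⟨e⟩]
  exact le_sSup ⟨P, hf, hp, rfl⟩

end Helpers

/-- **Extension of a predimension, additivity.** For every short exact sequence
`0 → A → B → C → 0` of `R`-modules, `dim B = dim A + dim C`. -/
theorem Predimension.dim_additive {R : Type v} [Ring R] (pd : Predimension.{u, v} R)
    (A B C : Type u) [AddCommGroup A] [Module R A] [AddCommGroup B] [Module R B]
    [AddCommGroup C] [Module R C] (f : A →ₗ[R] B) (g : B →ₗ[R] C)
    (hf : Function.Injective f) (hg : Function.Surjective g)
    (hfg : LinearMap.range f = LinearMap.ker g) :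
    pd.dim B = pd.dim A + pd.dim C := by
  -- Short exact sequence facts
  have hrange_le_ker : LinearMap.range f ≤ LinearMap.ker g := le_of_eq hfg
  -- First inequality: dim B ≤ dim A + dim C
  have hle1 : pd.dim B ≤ pd.dim A + pd.dim C := by
    refine sSup_le ?_
    rintro x ⟨P, hPfin, hPproj, rfl⟩
    set K : Submodule R ↥P := (LinearMap.ker g).comap P.subtype with hKdef
    obtain ⟨D, hD⟩ := pd.closure_isCompl ↥P hPfin hPproj K
    set Kb : Submodule R ↥P := submoduleClosure R K with hKbdef
    have hKbfin : Module.Finite R ↥Kb := finite_of_isCompl hPfin hD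
    have hKbproj : Module.Projective R ↥Kb := projective_of_isCompl hPproj hD
    have hDfin : Module.Finite R ↥D := finite_of_isCompl hPfin hD.symm
    have hDproj : Module.Projective R ↥D := projective_of_isCompl hPproj hD.symm
    haveI := hKbfin; haveI := hKbproj; haveI := hDfin; haveI := hDproj
    have hsplit : pd.pdim ↥P = pd.pdim ↥Kb + pd.pdim ↥D := by
      rw [← pd.pdim_add ↥Kb ↥D hKbfin hKbproj hDfin hDproj]
      exact pd.pdim_congr ↥P (↥Kb × ↥D) hPfin hPproj inferInstance inferInstance
        ⟨(Submodule.prodEquivOfIsCompl Kb D hD).symm⟩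
    have hKb_le : pd.pdim ↥Kb ≤ pd.dim A := by
      rw [pd.pdim_closure ↥P hPfin hPproj K]
      refine sSup_le ?_
      rintro x ⟨P', hP'K, hP'fin, hP'proj, rfl⟩
      -- P' maps into ker g = range f, pull back along f
      have h1 : P'.map P.subtype ≤ LinearMap.range f := by
        rw [hfg]
        rintro y ⟨z, hz, rfl⟩
        exact hP'K hz
      set PA : Submodule R A := (P'.map P.subtype).comap f with hPAdef
      have hmapPA : PA.map f = P'.map P.subtype := by
        rw [hPAdef, Submodule.map_comap_eq, inf_eq_right.mpr h1]
      have e1 : ↥P' ≃ₗ[R] ↥(P'.map P.subtype) :=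
        Submodule.equivMapOfInjective P.subtype (Submodule.injective_subtype P) P'
      have e2 : ↥PA ≃ₗ[R] ↥(P'.map P.subtype) :=
        (Submodule.equivMapOfInjective f hf PA).trans (LinearEquiv.ofEq _ _ hmapPA)
      exact pd.le_dim_of_equiv hP'fin hP'proj PA (e1.trans e2.symm)
    have hD_le : pd.pdim ↥D ≤ pd.dim C := by
      set h : ↥D →ₗ[R] C := g.comp (P.subtype.comp D.subtype) with hhdef
      have hinj : Function.Injective h := by
        refine LinearMap.ker_eq_bot.mp (LinearMap.ker_eq_bot'.mpr ?_)
        intro m hm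
        have hmK : (m : ↥P) ∈ K := by
          simp only [hKdef, Submodule.mem_comap, LinearMap.mem_ker]
          exact hm
        have hmKb : (m : ↥P) ∈ Kb := le_submoduleClosure K hmK
        have : (m : ↥P) = 0 :=
          (Submodule.mem_bot R).mp (hD.inf_eq_bot ▸ Submodule.mem_inf.mpr ⟨hmKb, m.2⟩)
        exact Subtype.ext this
      exact pd.le_dim_of_equiv hDfin hDproj (LinearMap.range h)
        (LinearEquiv.ofInjective h hinj)
    calc pd.pdim ↥P = pd.pdim ↥Kb + pd.pdim ↥D := hsplit
      _ ≤ pd.dim A + pd.dim C := add_le_add hKb_le hD_le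
  -- Second inequality: dim A + dim C ≤ dim B
  have hle2 : pd.dim A + pd.dim C ≤ pd.dim B := by
    have hbot : ∀ (M : Type u) [AddCommGroup M] [Module R M],
        {x : ℝ≥0∞ | ∃ P : Submodule R M,
          Module.Finite R ↥P ∧ Module.Projective R ↥P ∧ x = pd.pdim ↥P}.Nonempty := by
      intro M _ _
      haveI : Module.Projective R ↥(⊥ : Submodule R M) :=
        Module.Projective.of_free (R := R)
      exact ⟨pd.pdim ↥(⊥ : Submodule R M), ⊥, inferInstance, inferInstance, rfl⟩
    have hcore : ∀ x ∈ {x : ℝ≥0∞ | ∃ P : Submodule R A,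
          Module.Finite R ↥P ∧ Module.Projective R ↥P ∧ x = pd.pdim ↥P},
        ∀ y ∈ {x : ℝ≥0∞ | ∃ Q : Submodule R C,
          Module.Finite R ↥Q ∧ Module.Projective R ↥Q ∧ x = pd.pdim ↥Q},
        x + y ≤ pd.dim B := by
      rintro x ⟨P, hPfin, hPproj, rfl⟩ y ⟨Q, hQfin, hQproj, rfl⟩
      haveI := hPfin; haveI := hPproj; haveI := hQfin; haveI := hQproj
      obtain ⟨s, hs⟩ := Module.projective_lifting_property g Q.subtype hg
      set φ : (↥P × ↥Q) →ₗ[R] B := (f.comp P.subtype).coprod s with hφdef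
      have hinj : Function.Injective φ := by
        refine LinearMap.ker_eq_bot.mp (LinearMap.ker_eq_bot'.mpr ?_)
        rintro ⟨p, q⟩ hpq
        have hpq' : f (p : A) + s q = 0 := hpq
        have hgq : (q : C) = 0 := by
          have := congrArg g hpq'
          rw [map_add, map_zero] at this
          have h1 : g (f (p : A)) = 0 := hrange_le_ker ⟨(p : A), rfl⟩
          have h2 : g (s q) = (q : C) := by
            have := congrFun (congrArg DFunLike.coe hs) q
            exact this
          rw [h1, h2, zero_add] at this
          exact this
        have hq0 : q = 0 := Subtype.ext hgq
        have hp0 : (p : A) = 0 := by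
          rw [hq0, map_zero, add_zero] at hpq'
          exact hf (by rw [hpq', map_zero])
        exact Prod.ext (Subtype.ext hp0) hq0
      have hsum : pd.pdim ↥P + pd.pdim ↥Q = pd.pdim (↥P × ↥Q) :=
        (pd.pdim_add ↥P ↥Q hPfin hPproj hQfin hQproj).symm
      rw [hsum]
      exact pd.le_dim_of_equiv inferInstance inferInstance (LinearMap.range φ)
        (LinearEquiv.ofInjective φ hinj)
    rw [Predimension.dim, Predimension.dim, ENNReal.sSup_add (hbot A)]
    refine iSup₂_le fun x hx => ?_
    rw [ENNReal.add_sSup (hbot C)]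
    exact iSup₂_le fun y hy => hcore x hx y hy
  exact le_antisymm hle1 hle2
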